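/- Let 0 < r ≤ 1 and b ∈ ℂ with Re(b) ≥ 1. Then the Minkowski product K(1,b)·D(1,r) is star-shaped with 1 as star center: for every z in the product and t ∈ [0,1], tz + (1-t) is also in the product. -/

import Mathlib

open Complex Set Metric

theorem stmt_16 (r : ℝ) (hr : 0 < r) (hr1 : r ≤ 1) (b : ℂ) (hb : 1 ≤ b.re) :
    ∀ z ∈ Set.image2 (· * ·) (segment ℝ (1 : ℂ) b) (Metric.closedBall (1 : ℂ) r),
      ∀ t ∈ Set.Icc (0:ℝ) 1,
        (t : ℂ) * z + ((1 - t) : ℂ) ∈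
          Set.image2 (· * ·) (segment ℝ (1 : ℂ) b) (Metric.closedBall (1 : ℂ) r) := by
  rintro z ⟨s, hs, d, hd, rfl⟩ t ⟨ht0, ht1⟩
  rw [segment_eq_image] at hs
  obtain ⟨u, ⟨hu0, hu1⟩, rfl⟩ := hs
  set s : ℂ := (1 - u) • (1:ℂ) + u • b with hs_def
  have hsre : 1 ≤ s.re := by
    simp only [hs_def, Complex.add_re, Complex.smul_re, Complex.one_re, mul_one, smul_eq_mul]
    nlinarith
  set c : ℂ := (t:ℂ) * s + (1 - (t:ℂ)) with hc_def
  have hcre : c.re = t * s.re + (1 - t) := by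
    simp [hc_def]
  have hcim : c.im = t * s.im := by
    simp [hc_def]
  have hcre1 : 1 ≤ c.re := by rw [hcre]; nlinarith
  have hc0 : c ≠ 0 := by
    intro h
    rw [h] at hcre1; simp at hcre1; linarith
  have hcpos : 0 < ‖c‖ := norm_pos_iff.mpr hc0
  have hca : ‖c‖ ^ 2 = c.re ^ 2 + c.im ^ 2 := by
    rw [Complex.sq_norm, Complex.normSq_apply]; ring
  have hsa : ‖s‖ ^ 2 = s.re ^ 2 + s.im ^ 2 := by
    rw [Complex.sq_norm, Complex.normSq_apply]; ring
  have hkey : t * ‖s‖ ≤ ‖c‖ := by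
    have h1 : (t * ‖s‖) ^ 2 ≤ (‖c‖) ^ 2 := by
      rw [mul_pow, hsa, hca, hcre, hcim]
      nlinarith
    nlinarith [norm_nonneg c, mul_nonneg ht0 (norm_nonneg s)]
  have hd' : ‖d - 1‖ ≤ r := by
    rw [mem_closedBall, Complex.dist_eq] at hd; exact hd
  refine ⟨c, ?_, ((t:ℂ) * s * d + (1 - (t:ℂ))) / c, ?_, ?_⟩
  · rw [segment_eq_image]
    refine ⟨t * u, ⟨mul_nonneg ht0 hu0, by nlinarith⟩, ?_⟩
    simp only [hc_def, hs_def, Complex.real_smul]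
    push_cast
    ring
  · rw [mem_closedBall, Complex.dist_eq]
    have heq : ((t:ℂ) * s * d + (1 - (t:ℂ))) / c - 1 = (t:ℂ) * s * (d - 1) / c := by
      field_simp
      rw [hc_def]
      ring
    rw [heq, norm_div, norm_mul, norm_mul, Complex.norm_real, Real.norm_eq_abs, _root_.abs_of_nonneg ht0,
      div_le_iff₀ hcpos]
    nlinarith [norm_nonneg (d - 1), mul_nonneg ht0 (norm_nonneg s)]
  · show c * (((t:ℂ) * s * d + (1 - (t:ℂ))) / c) = (t:ℂ) * (s * d) + (1 - (t:ℂ))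
    rw [mul_comm, div_mul_cancel₀ _ hc0]
    ring
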